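/- Let f : ℂ^n → ℂ^n be a polynomial map whose components P₁,…,Pₙ are homogeneous polynomials of positive degree, and suppose f⁻¹(0) = {0}. Then the ring map ℂ[Y₁,…,Yₙ] → ℂ[X₁,…,Xₙ] sending Yᵢ to Pᵢ makes ℂ[X₁,…,Xₙ] into a finitely generated module over the subring ℂ[P₁,…,Pₙ]. -/

import Mathlib

open MvPolynomial Finsupp

/-- Homogeneous component of a product with a homogeneous polynomial. -/
lemma hc_mul_homog {σ : Type*} (c Q : MvPolynomial σ ℂ) (dq m : ℕ)
    (hQ : Q.IsHomogeneous dq) :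
    homogeneousComponent m (c * Q) =
      if dq ≤ m then homogeneousComponent (m - dq) c * Q else 0 := by
  have h1 : c * Q = ∑ i ∈ Finset.range (c.totalDegree + 1),
      homogeneousComponent i c * Q := by
    rw [← Finset.sum_mul, sum_homogeneousComponent]
  rw [h1, map_sum]
  have h2 : ∀ i ∈ Finset.range (c.totalDegree + 1),
      homogeneousComponent m (homogeneousComponent i c * Q) =
        if m = i + dq then homogeneousComponent i c * Q else 0 := by
    intro i _
    exact homogeneousComponent_of_mem
      ((mem_homogeneousSubmodule _ _).2
        ((homogeneousComponent_isHomogeneous i c).mul hQ))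
  rw [Finset.sum_congr rfl h2]
  by_cases hdq : dq ≤ m
  · have h3 : ∀ i, (m = i + dq) = (m - dq = i) := by
      intro i; apply propext; omega
    simp_rw [h3]
    rw [Finset.sum_ite_eq]
    split_ifs with h
    · rfl
    · have : homogeneousComponent (m - dq) c = 0 :=
        homogeneousComponent_eq_zero _ c (by
          simp only [Finset.mem_range, not_lt] at h; omega)
      rw [this, zero_mul]
  · rw [if_neg hdq]
    apply Finset.sum_eq_zero
    intro i _
    rw [if_neg (by omega)]

/-- A homogeneous element of the ideal generated by the `P j` can be written with
homogeneous coefficients of the right degrees. -/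
lemma homog_mem_span_decomp {n : ℕ} (P : Fin n → MvPolynomial (Fin n) ℂ)
    (d : Fin n → ℕ) (hhom : ∀ i, (P i).IsHomogeneous (d i))
    {f : MvPolynomial (Fin n) ℂ} {D : ℕ} (hf : f.IsHomogeneous D)
    (hmem : f ∈ Ideal.span (Set.range P)) :
    ∃ g : Fin n → MvPolynomial (Fin n) ℂ,
      (∀ j, (g j).IsHomogeneous (D - d j)) ∧ f = ∑ j, g j * P j := by
  obtain ⟨c, hc⟩ := Ideal.mem_span_range_iff_exists_fun.mp hmem
  refine ⟨fun j => if d j ≤ D then homogeneousComponent (D - d j) (c j) else 0, ?_, ?_⟩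
  · intro j
    dsimp only
    split_ifs
    · exact homogeneousComponent_isHomogeneous _ _
    · exact isHomogeneous_zero _ _ _
  · have hfD : homogeneousComponent D f = f :=
      (homogeneousComponent_of_mem ((mem_homogeneousSubmodule _ _).2 hf)).trans
        (if_pos rfl)
    calc f = homogeneousComponent D f := hfD.symm
      _ = homogeneousComponent D (∑ j, c j * P j) := by rw [hc]
      _ = ∑ j, homogeneousComponent D (c j * P j) := map_sum _ _ _
      _ = ∑ j, (if d j ≤ D then homogeneousComponent (D - d j) (c j) else 0) * P j := by
          refine Finset.sum_congr rfl fun j _ => ?_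
          rw [hc_mul_homog (c j) (P j) (d j) D (hhom j)]
          split_ifs
          · rfl
          · rw [zero_mul]

/-- If `P₁, …, Pₙ ∈ ℂ[X₁,…,Xₙ]` are homogeneous of positive degree and their only common
zero in `ℂⁿ` is the origin, then `ℂ[X₁,…,Xₙ]` is a finitely generated module over the
subalgebra `ℂ[P₁,…,Pₙ]`. -/
theorem finiteness_of_homogeneous_no_common_zero
    (n : ℕ) (P : Fin n → MvPolynomial (Fin n) ℂ) (d : Fin n → ℕ)
    (hd : ∀ i, 1 ≤ d i)
    (hhom : ∀ i, MvPolynomial.IsHomogeneous (P i) (d i))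
    (hz : ∀ a : Fin n → ℂ, (∀ i, MvPolynomial.eval a (P i) = 0) → a = 0) :
    Module.Finite (Algebra.adjoin ℂ (Set.range P)) (MvPolynomial (Fin n) ℂ) := by
  classical
  set I : Ideal (MvPolynomial (Fin n) ℂ) := Ideal.span (Set.range P) with hI
  have hPI : ∀ j, P j ∈ I := fun j => Ideal.subset_span ⟨j, rfl⟩
  -- Nullstellensatz: each Xᵢ is in the radical of I
  have hXrad : ∀ i, (X i : MvPolynomial (Fin n) ℂ) ∈ I.radical := by
    intro i
    rw [← vanishingIdeal_zeroLocus_eq_radical (K := ℂ), mem_vanishingIdeal_iff]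
    intro x hx
    have hx0 : x = 0 := hz x fun j => (mem_zeroLocus_iff.mp hx) _ (hPI j)
    simp [hx0]
  choose k hk using fun i => (Ideal.mem_radical_iff.mp (hXrad i))
  set K : ℕ := Finset.univ.sup k + 1 with hK
  have hK1 : 1 ≤ K := Nat.le_add_left 1 _
  have hXK : ∀ i, (X i : MvPolynomial (Fin n) ℂ) ^ K ∈ I := by
    intro i
    have hki : k i ≤ K := le_trans (Finset.le_sup (Finset.mem_univ i)) (Nat.le_succ _)
    have : (X i : MvPolynomial (Fin n) ℂ) ^ K = X i ^ (K - k i) * X i ^ k i := by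
      rw [← pow_add]; congr 1; omega
    rw [this]
    exact I.mul_mem_left _ (hk i)
  set N : ℕ := n * (K - 1) + 1 with hN
  set R := Algebra.adjoin ℂ (Set.range P) with hR
  set M : Submodule R (MvPolynomial (Fin n) ℂ) :=
    Submodule.span R ((fun e : Fin n →₀ ℕ => (monomial e 1 : MvPolynomial (Fin n) ℂ)) '' {e | e.degree < N})
    with hM
  -- closure of M under multiplication by constants and by the P j
  have hCs : ∀ (c : ℂ) (x : MvPolynomial (Fin n) ℂ), x ∈ M → C c * x ∈ M := by
    intro c x hx
    have : C c * x = (algebraMap ℂ R c) • x := by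
      rw [Algebra.smul_def (algebraMap ℂ R c) x]
      rfl
    rw [this]
    exact M.smul_mem _ hx
  have hPmul : ∀ (j : Fin n) (x : MvPolynomial (Fin n) ℂ), x ∈ M → P j * x ∈ M := by
    intro j x hx
    have hPj : P j ∈ R := Algebra.subset_adjoin ⟨j, rfl⟩
    have : P j * x = (⟨P j, hPj⟩ : R) • x := rfl
    rw [this]
    exact M.smul_mem _ hx
  -- main claim by strong induction on the degree
  have key : ∀ D : ℕ, ∀ f : MvPolynomial (Fin n) ℂ, f.IsHomogeneous D → f ∈ M := by
    intro D
    induction D using Nat.strong_induction_on with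
    | _ D IH =>
      intro f hf
      rw [f.as_sum]
      refine Submodule.sum_mem _ fun e he => ?_
      have hedeg : e.degree = D := by
        have := hf (MvPolynomial.mem_support_iff.mp he)
        rwa [degree_eq_weight_one]
      by_cases hD : D < N
      · have : (monomial e (coeff e f) : MvPolynomial (Fin n) ℂ) = C (coeff e f) * monomial e 1 := by
          rw [C_mul_monomial, mul_one]
        rw [this]
        exact hCs _ _ (Submodule.subset_span ⟨e, by simp only [Set.mem_setOf_eq]; omega, rfl⟩)
      · -- pigeonhole: some exponent is at least K
        have hn : 0 < n := by
          rcases Nat.eq_zero_or_pos n with h0 | h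
          · exfalso
            subst h0
            have : e.degree = 0 := by
              rw [Finsupp.degree]
              apply Finset.sum_eq_zero
              intro i _
              exact absurd i.2 (by omega)
            omega
          · exact h
        have hKN : K ≤ N := by
          have h1 : K - 1 ≤ n * (K - 1) := Nat.le_mul_of_pos_left (K - 1) hn
          omega
        obtain ⟨i, hi⟩ : ∃ i, K ≤ e i := by
          by_contra h
          push_neg at h
          have : e.degree ≤ n * (K - 1) := by
            calc e.degree = ∑ j ∈ e.support, e j := rfl
              _ ≤ ∑ _j ∈ e.support, (K - 1) :=
                  Finset.sum_le_sum fun j _ => by have := h j; omega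
              _ = e.support.card * (K - 1) := by rw [Finset.sum_const, smul_eq_mul]
              _ ≤ n * (K - 1) := by
                  apply Nat.mul_le_mul_right
                  simpa using Finset.card_le_card (Finset.subset_univ e.support)
          omega
        set e' : Fin n →₀ ℕ := e - Finsupp.single i K with he'
        have hee : e = e' + Finsupp.single i K := by
          ext j
          simp only [he', Finsupp.add_apply, Finsupp.tsub_apply, Finsupp.single_apply]
          split_ifs with hji
          · subst hji; omega
          · omega
        have hdeg' : e'.degree + K = D := by
          have h1 : (e' + Finsupp.single i K).degree = e'.degree + (Finsupp.single i K).degree := by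
            simp only [degree_eq_weight_one]
            exact map_add _ _ _
          have h2 : (Finsupp.single i K).degree = K := by
            exact Finsupp.degree_single i K
          rw [hee] at hedeg
          rw [h1, h2] at hedeg
          omega
        obtain ⟨g, hg, hgdec⟩ := homog_mem_span_decomp P d hhom
          (by simpa using (isHomogeneous_X ℂ i).pow K) (hXK i)
        have hmon : (monomial e (coeff e f) : MvPolynomial (Fin n) ℂ)
            = ∑ j, P j * (monomial e' (coeff e f) * g j) := by
          have : (monomial e (coeff e f) : MvPolynomial (Fin n) ℂ) = monomial e' (coeff e f) * (X i ^ K) := by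
            rw [hee, X_pow_eq_monomial, monomial_mul, mul_one]
          rw [this, hgdec, Finset.mul_sum]
          exact Finset.sum_congr rfl fun j _ => by ring
        rw [hmon]
        refine Submodule.sum_mem _ fun j _ => ?_
        apply hPmul
        apply IH (e'.degree + (K - d j)) (by have := hd j; omega)
        exact (isHomogeneous_monomial _ rfl).mul (hg j)
  -- conclude finiteness
  refine ⟨Submodule.fg_def.mpr
    ⟨(fun e : Fin n →₀ ℕ => (monomial e 1 : MvPolynomial (Fin n) ℂ)) '' {e | e.degree < N}, ?_, ?_⟩⟩
  · exact Set.Finite.image _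
      ((Finsupp.finite_of_degree_le (N)).subset fun e (he : e.degree < N) => (Nat.le_of_lt he : e.degree ≤ N))
  · rw [← hM]
    refine le_antisymm le_top fun f _ => ?_
    rw [← sum_homogeneousComponent f]
    exact Submodule.sum_mem _ fun i _ => key i _ (homogeneousComponent_isHomogeneous i f)
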